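/- Observers of quantum systems cannot agree to disagree: no quantum box, with arbitrary finite input sets X, Y containing {0,1} and finite output sets A, B containing {0,1}, can exhibit common certainty of disagreement. -/

import Mathlib

open Finset
open scoped ComplexOrder

attribute [local instance] Classical.propDecidable

noncomputable section

/-- A bipartite box `P a b x y = P(a,b|x,y)`: nonnegative entries summing to one over
the outputs, for every pair of inputs. -/
def IsBox {nA nB nX nY : ℕ} (P : Fin nA → Fin nB → Fin nX → Fin nY → ℝ) : Prop :=
  (∀ a b x y, 0 ≤ P a b x y) ∧ ∀ x y, ∑ a, ∑ b, P a b x y = 1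

/-- A bipartite box is nonsignalling if Alice's output marginal does not depend on
Bob's input and vice versa. -/
def NonSignallingBox {nA nB nX nY : ℕ}
    (P : Fin nA → Fin nB → Fin nX → Fin nY → ℝ) : Prop :=
  (∀ a x y y', ∑ b, P a b x y = ∑ b, P a b x y') ∧
  (∀ b y x x', ∑ a, P a b x y = ∑ a, P a b x' y)

/-- A quantum box: realised by local POVMs on a shared bipartite quantum state. -/
def IsQuantumBox {nA nB nX nY : ℕ}
    (P : Fin nA → Fin nB → Fin nX → Fin nY → ℝ) : Prop :=
  ∃ (dA dB : ℕ) (ρ : Matrix (Fin dA × Fin dB) (Fin dA × Fin dB) ℂ)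
    (E : Fin nX → Fin nA → Matrix (Fin dA) (Fin dA) ℂ)
    (F : Fin nY → Fin nB → Matrix (Fin dB) (Fin dB) ℂ),
    ρ.PosSemidef ∧ ρ.trace = 1 ∧
    (∀ x a, (E x a).PosSemidef) ∧ (∀ x, ∑ a, E x a = 1) ∧
    (∀ y b, (F y b).PosSemidef) ∧ (∀ y, ∑ b, F y b = 1) ∧
    ∀ a b x y, (P a b x y : ℂ) =
      ∑ q : Fin dA × Fin dB, ∑ q' : Fin dA × Fin dB,
        E x a q.1 q'.1 * F y b q.2 q'.2 * ρ q' q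

/-- The pair of output sets `(αₙ, βₙ)` of the agreement argument for boxes:
`α₀` is the set of Alice's outputs (on input `x0`) for which she assigns conditional
probability `qA` to Bob outputting `b1` on input `y1` (similarly `β₀` for Bob), and
`α_{n+1}` (resp. `β_{n+1}`) is the subset of `αₙ` (resp. `βₙ`) at which Alice (resp.
Bob) is moreover certain, on inputs `(x0, y0)`, that Bob's (resp. Alice's) output lies
in `βₙ` (resp. `αₙ`). -/
def ccdSets {nA nB nX nY : ℕ} (P : Fin nA → Fin nB → Fin nX → Fin nY → ℝ)
    (x0 x1 : Fin nX) (y0 y1 : Fin nY) (a1 : Fin nA) (b1 : Fin nB) (qA qB : ℝ) :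
    ℕ → Finset (Fin nA) × Finset (Fin nB)
  | 0 => (univ.filter fun a => P a b1 x0 y1 / (∑ b, P a b x0 y1) = qA,
          univ.filter fun b => P a1 b x1 y0 / (∑ a, P a b x1 y0) = qB)
  | n + 1 =>
      let s := ccdSets P x0 x1 y0 y1 a1 b1 qA qB n
      (s.1.filter fun a => (∑ b ∈ s.2, P a b x0 y0) / (∑ b, P a b x0 y0) = 1,
       s.2.filter fun b => (∑ a ∈ s.1, P a b x0 y0) / (∑ a, P a b x0 y0) = 1)

/-- A box exhibits **common certainty of disagreement** (at inputs/outputs `(0,0,0,0)`,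
about the outputs of interest `(1,1)` on inputs `(1,1)`) if: the outputs on inputs
`(1,1)` are perfectly correlated, the event `(0,0,0,0)` has positive probability, and
there are `q_A ≠ q_B` in `[0,1]` with `0 ∈ αₙ` and `0 ∈ βₙ` for every `n`. -/
def HasCCD {nA nB nX nY : ℕ} (hA : 2 ≤ nA) (hB : 2 ≤ nB) (hX : 2 ≤ nX) (hY : 2 ≤ nY)
    (P : Fin nA → Fin nB → Fin nX → Fin nY → ℝ) : Prop :=
  let a0 : Fin nA := ⟨0, by omega⟩
  let a1 : Fin nA := ⟨1, hA⟩
  let b0 : Fin nB := ⟨0, by omega⟩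
  let b1 : Fin nB := ⟨1, hB⟩
  let x0 : Fin nX := ⟨0, by omega⟩
  let x1 : Fin nX := ⟨1, hX⟩
  let y0 : Fin nY := ⟨0, by omega⟩
  let y1 : Fin nY := ⟨1, hY⟩
  (∀ (a : Fin nA) (b : Fin nB), (a : ℕ) ≠ (b : ℕ) → P a b x1 y1 = 0) ∧
  0 < P a0 b0 x0 y0 ∧
  ∃ qA qB : ℝ, qA ∈ Set.Icc (0 : ℝ) 1 ∧ qB ∈ Set.Icc (0 : ℝ) 1 ∧ qA ≠ qB ∧
    ∀ n : ℕ, a0 ∈ (ccdSets P x0 x1 y0 y1 a1 b1 qA qB n).1 ∧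
             b0 ∈ (ccdSets P x0 x1 y0 y1 a1 b1 qA qB n).2

/-- A box exhibits **singular disagreement** if: the outputs on inputs `(1,1)` are
perfectly correlated, the event `(0,0,0,0)` has positive probability, and the
well-defined conditional probabilities satisfy `P(b=1|a=0,x=0,y=1) = 1` and
`P(a=1|b=0,x=1,y=0) = 0`. -/
def HasSD {nA nB nX nY : ℕ} (hA : 2 ≤ nA) (hB : 2 ≤ nB) (hX : 2 ≤ nX) (hY : 2 ≤ nY)
    (P : Fin nA → Fin nB → Fin nX → Fin nY → ℝ) : Prop :=
  let a0 : Fin nA := ⟨0, by omega⟩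
  let a1 : Fin nA := ⟨1, hA⟩
  let b0 : Fin nB := ⟨0, by omega⟩
  let b1 : Fin nB := ⟨1, hB⟩
  let x0 : Fin nX := ⟨0, by omega⟩
  let x1 : Fin nX := ⟨1, hX⟩
  let y0 : Fin nY := ⟨0, by omega⟩
  let y1 : Fin nY := ⟨1, hY⟩
  (∀ (a : Fin nA) (b : Fin nB), (a : ℕ) ≠ (b : ℕ) → P a b x1 y1 = 0) ∧
  0 < P a0 b0 x0 y0 ∧
  (0 < ∑ b, P a0 b x0 y1 ∧ P a0 b1 x0 y1 / (∑ b, P a0 b x0 y1) = 1) ∧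
  (0 < ∑ a, P a b0 x1 y0 ∧ P a1 b0 x1 y0 / (∑ a, P a b0 x1 y0) = 0)


section QAux
open Matrix
open scoped Kronecker ComplexOrder
set_option linter.unusedSectionVars false


variable {n m : Type*} [Fintype n] [Fintype m] [DecidableEq n] [DecidableEq m]

open scoped MatrixOrder in
lemma qaux_psd_iff {A : Matrix n n ℂ} : A.PosSemidef ↔ ∃ B : Matrix n n ℂ, A = Bᴴ * B := by
  constructor
  · intro hA
    obtain ⟨X, hX, -, hXX⟩ :=
      CFC.exists_sqrt_of_isSelfAdjoint_of_quasispectrumRestricts hA.isHermitian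
        (QuasispectrumRestricts.nnreal_of_nonneg hA.nonneg)
    refine ⟨X, ?_⟩
    rw [← hXX]
    exact congrArg (· * X) hX.star_eq.symm
  · rintro ⟨B, rfl⟩
    exact Matrix.posSemidef_conjTranspose_mul_self B
lemma qaux_psd_add {A B : Matrix n n ℂ} (hA : A.PosSemidef) (hB : B.PosSemidef) :
    (A + B).PosSemidef :=
  hA.add hB

lemma qaux_psd_sum {ι : Type*} (s : Finset ι) (f : ι → Matrix n n ℂ)
    (h : ∀ i ∈ s, (f i).PosSemidef) : (∑ i ∈ s, f i).PosSemidef :=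
  Finset.sum_induction f _ (fun _ _ ha hb => qaux_psd_add ha hb) Matrix.PosSemidef.zero h

lemma qaux_kron_conjTranspose (A : Matrix n n ℂ) (B : Matrix m m ℂ) :
    (A ⊗ₖ B)ᴴ = Aᴴ ⊗ₖ Bᴴ := by
  ext q q'
  simp [Matrix.kroneckerMap_apply, Matrix.conjTranspose_apply, mul_comm]

lemma qaux_psd_kron {A : Matrix n n ℂ} {B : Matrix m m ℂ}
    (hA : A.PosSemidef) (hB : B.PosSemidef) : (A ⊗ₖ B).PosSemidef := by
  obtain ⟨C, rfl⟩ := qaux_psd_iff.mp hA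
  obtain ⟨D, rfl⟩ := qaux_psd_iff.mp hB
  rw [Matrix.mul_kronecker_mul, ← qaux_kron_conjTranspose]
  exact Matrix.posSemidef_conjTranspose_mul_self _


variable {n m : Type*} [Fintype n] [Fintype m] [DecidableEq n] [DecidableEq m]

lemma qaux_psd_diag_nonneg {M : Matrix n n ℂ} (hM : M.PosSemidef) (i : n) :
    0 ≤ M i i :=
  hM.diag_nonneg

lemma qaux_psd_trace_nonneg {M : Matrix n n ℂ} (hM : M.PosSemidef) :
    0 ≤ M.trace :=
  Finset.sum_nonneg fun i _ => qaux_psd_diag_nonneg hM i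

lemma qaux_psd_trace_zero {M : Matrix n n ℂ} (hM : M.PosSemidef)
    (h : M.trace = 0) : M = 0 := by
  obtain ⟨B, rfl⟩ := qaux_psd_iff.mp hM
  have hd : ∀ j, (Bᴴ * B) j j = dotProduct (star fun i => B i j) (fun i => B i j) := by
    intro j
    simp [Matrix.mul_apply, dotProduct, Matrix.conjTranspose_apply]
  have hz : ∀ j ∈ Finset.univ, ((Bᴴ * B) : Matrix n n ℂ).diag j = 0 := by
    rw [Matrix.trace] at h
    refine (Finset.sum_eq_zero_iff_of_nonneg ?_).mp h
    intro i _
    rw [Matrix.diag_apply, hd i]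
    exact dotProduct_star_self_nonneg _
  have hB : B = 0 := by
    ext i j
    have h2 := hz j (Finset.mem_univ j)
    rw [Matrix.diag_apply, hd j] at h2
    exact congrFun (dotProduct_star_self_eq_zero.mp h2) i
  rw [hB]; simp

lemma qaux_psd_mul_trace_zero {A R : Matrix n n ℂ} (hA : A.PosSemidef)
    (hR : R.PosSemidef) (h : (A * R).trace = 0) : A * R = 0 := by
  obtain ⟨B, rfl⟩ := qaux_psd_iff.mp hR
  obtain ⟨C, hC⟩ := qaux_psd_iff.mp hA
  have h1 : (B * A * Bᴴ).trace = 0 := by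
    rw [Matrix.mul_assoc, ← Matrix.trace_mul_comm, Matrix.mul_assoc]
    exact h
  have h2 : B * A * Bᴴ = 0 := qaux_psd_trace_zero (hA.mul_mul_conjTranspose_same B) h1
  have h3 : C * Bᴴ = 0 := by
    have h4 : (C * Bᴴ)ᴴ * (C * Bᴴ) = 0 := by
      rw [Matrix.conjTranspose_mul, Matrix.conjTranspose_conjTranspose]
      calc B * Cᴴ * (C * Bᴴ) = B * (Cᴴ * C) * Bᴴ := by
            simp only [Matrix.mul_assoc]
        _ = 0 := by rw [← hC]; exact h2
    exact Matrix.conjTranspose_mul_self_eq_zero.mp h4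
  calc A * (Bᴴ * B) = Cᴴ * (C * Bᴴ) * B := by
        rw [hC]; simp only [Matrix.mul_assoc]
    _ = 0 := by rw [h3]; simp

lemma qaux_psd_mul_trace_nonneg {A R : Matrix n n ℂ} (hA : A.PosSemidef)
    (hR : R.PosSemidef) : 0 ≤ (A * R).trace := by
  obtain ⟨B, rfl⟩ := qaux_psd_iff.mp hR
  have h : (A * (Bᴴ * B)).trace = (B * A * Bᴴ).trace := by
    rw [← Matrix.mul_assoc, Matrix.trace_mul_comm, Matrix.mul_assoc]
  rw [h]
  exact qaux_psd_trace_nonneg (hA.mul_mul_conjTranspose_same B)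

end QAux

/-- **Observers of quantum systems cannot agree to disagree.** No quantum box, with
arbitrary finite input and output sets containing `{0,1}`, can exhibit common certainty
of disagreement. -/
theorem quantum_no_common_certainty_of_disagreement
    {nA nB nX nY : ℕ} (hA : 2 ≤ nA) (hB : 2 ≤ nB) (hX : 2 ≤ nX) (hY : 2 ≤ nY)
    (P : Fin nA → Fin nB → Fin nX → Fin nY → ℝ)
    (hq : IsQuantumBox P) :
    ¬ HasCCD hA hB hX hY P := by
  rintro ⟨hpc, hpos, qA, qB, hqA01, hqB01, hqne, hmem⟩
  set a0 : Fin nA := ⟨0, by omega⟩ with ha0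
  set a1 : Fin nA := ⟨1, hA⟩ with ha1
  set b0 : Fin nB := ⟨0, by omega⟩ with hb0
  set b1 : Fin nB := ⟨1, hB⟩ with hb1
  set x0 : Fin nX := ⟨0, by omega⟩ with hx0
  set x1 : Fin nX := ⟨1, hX⟩ with hx1
  set y0 : Fin nY := ⟨0, by omega⟩ with hy0
  set y1 : Fin nY := ⟨1, hY⟩ with hy1
  set S : ℕ → Finset (Fin nA) × Finset (Fin nB) := ccdSets P x0 x1 y0 y1 a1 b1 qA qB with hS
  -- basic structure of the sets
  have hSsucc : ∀ n, S (n + 1) =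
      ((S n).1.filter fun a => (∑ b ∈ (S n).2, P a b x0 y0) / (∑ b, P a b x0 y0) = 1,
       (S n).2.filter fun b => (∑ a ∈ (S n).1, P a b x0 y0) / (∑ a, P a b x0 y0) = 1) := by
    intro n
    rfl
  have hsub1 : ∀ n, (S (n+1)).1 ⊆ (S n).1 := by
    intro n; rw [hSsucc n]; exact Finset.filter_subset _ _
  have hsub2 : ∀ n, (S (n+1)).2 ⊆ (S n).2 := by
    intro n; rw [hSsucc n]; exact Finset.filter_subset _ _
  have hstab : ∃ N, S (N + 1) = S N := by
    by_contra hne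
    push_neg at hne
    have hlt : ∀ n, (S (n+1)).1.card + (S (n+1)).2.card < (S n).1.card + (S n).2.card := by
      intro n
      have h1 := Finset.card_le_card (hsub1 n)
      have h2 := Finset.card_le_card (hsub2 n)
      rcases eq_or_lt_of_le h1 with he | hl
      · rcases eq_or_lt_of_le h2 with he2 | hl2
        · exfalso
          apply hne n
          have e1 : (S (n+1)).1 = (S n).1 := Finset.eq_of_subset_of_card_le (hsub1 n) (le_of_eq he.symm)
          have e2 : (S (n+1)).2 = (S n).2 := Finset.eq_of_subset_of_card_le (hsub2 n) (le_of_eq he2.symm)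
          exact Prod.ext e1 e2
        · omega
      · omega
    have hmono : ∀ n, (S n).1.card + (S n).2.card + n ≤ (S 0).1.card + (S 0).2.card := by
      intro n
      induction n with
      | zero => omega
      | succ k ih => have := hlt k; omega
    have := hmono ((S 0).1.card + (S 0).2.card + 1)
    omega
  obtain ⟨N, hNstab⟩ := hstab
  set α : Finset (Fin nA) := (S N).1 with hα
  set β : Finset (Fin nB) := (S N).2 with hβ
  have ha0α : a0 ∈ α := (hmem N).1
  have hb0β : b0 ∈ β := (hmem N).2
  -- level 0 membership
  have hmono1 : ∀ n, (S n).1 ⊆ (S 0).1 := by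
    intro n; induction n with
    | zero => exact subset_rfl
    | succ k ih => exact (hsub1 k).trans ih
  have hmono2 : ∀ n, (S n).2 ⊆ (S 0).2 := by
    intro n; induction n with
    | zero => exact subset_rfl
    | succ k ih => exact (hsub2 k).trans ih
  -- quantum data
  obtain ⟨dA, dB, ρ, E, F, hρ, hρtr, hE, hEsum, hF, hFsum, hrep⟩ := hq
  have hP : ∀ a b x y, (P a b x y : ℂ) =
      ((Matrix.kroneckerMap (· * ·) (E x a) (F y b)) * ρ).trace := by
    intro a b x y
    rw [hrep]
    simp only [Matrix.trace, Matrix.diag, Matrix.mul_apply, Matrix.kroneckerMap_apply]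
    try exact Finset.sum_congr rfl fun q _ => Finset.sum_congr rfl fun q' _ => by ring
  have hPnonneg : ∀ a b x y, 0 ≤ P a b x y := by
    intro a b x y
    have h0 : (0:ℂ) ≤ (P a b x y : ℂ) := by
      rw [hP]
      exact qaux_psd_mul_trace_nonneg (qaux_psd_kron (hE x a) (hF y b)) hρ
    exact_mod_cast h0
  -- sums of kroneckers
  have hkron_sum : ∀ (sa : Finset (Fin nA)) (sb : Finset (Fin nB))
      (A : Fin nA → Matrix (Fin dA) (Fin dA) ℂ) (B : Fin nB → Matrix (Fin dB) (Fin dB) ℂ),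
      Matrix.kroneckerMap (· * ·) (∑ a ∈ sa, A a) (∑ b ∈ sb, B b)
        = ∑ a ∈ sa, ∑ b ∈ sb, Matrix.kroneckerMap (· * ·) (A a) (B b) := by
    intro sa sb A B
    ext q q'
    simp only [Matrix.kroneckerMap_apply, Matrix.sum_apply, Finset.sum_mul, Finset.mul_sum]
    rw [Finset.sum_comm]
  -- nonsignalling
  have hnsA : ∀ a x y y', ∑ b, P a b x y = ∑ b, P a b x y' := by
    intro a x y y'
    have key : ∀ y'' : Fin nY, ((∑ b, P a b x y'' : ℝ) : ℂ)
        = ((Matrix.kroneckerMap (· * ·) (E x a) (1 : Matrix (Fin dB) (Fin dB) ℂ)) * ρ).trace := by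
      intro y''
      push_cast
      have expand : Matrix.kroneckerMap (· * ·) (E x a) (1 : Matrix (Fin dB) (Fin dB) ℂ)
          = ∑ b, Matrix.kroneckerMap (· * ·) (E x a) (F y'' b) := by
        have h1 := hkron_sum {a} Finset.univ (E x) (F y'')
        simp only [Finset.sum_singleton, hFsum y''] at h1
        exact h1
      rw [expand, Finset.sum_mul, Matrix.trace_sum]
      exact Finset.sum_congr rfl fun b _ => hP a b x y''
    have := (key y).trans (key y').symm
    exact_mod_cast this
  have hnsB : ∀ b y x x', ∑ a, P a b x y = ∑ a, P a b x' y := by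
    intro b y x x'
    have key : ∀ x'' : Fin nX, ((∑ a, P a b x'' y : ℝ) : ℂ)
        = ((Matrix.kroneckerMap (· * ·) (1 : Matrix (Fin dA) (Fin dA) ℂ) (F y b)) * ρ).trace := by
      intro x''
      push_cast
      have expand : Matrix.kroneckerMap (· * ·) (1 : Matrix (Fin dA) (Fin dA) ℂ) (F y b)
          = ∑ a, Matrix.kroneckerMap (· * ·) (E x'' a) (F y b) := by
        have h1 := hkron_sum Finset.univ {b} (E x'') (F y)
        simp only [Finset.sum_singleton, hEsum x''] at h1
        exact h1
      rw [expand, Finset.sum_mul, Matrix.trace_sum]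
      exact Finset.sum_congr rfl fun a _ => hP a b x'' y
    have := (key x).trans (key x').symm
    exact_mod_cast this
  -- certainty conditions at the stable level
  have hαcert : ∀ a ∈ α, ∀ b, b ∉ β → P a b x0 y0 = 0 := by
    intro a haα b hbβ
    have haN1 : a ∈ (S (N+1)).1 := by rw [hNstab]; exact haα
    rw [hSsucc N] at haN1
    obtain ⟨-, hdiv⟩ := Finset.mem_filter.mp haN1
    have hden : (∑ b, P a b x0 y0) ≠ 0 := by
      intro h0; rw [h0, div_zero] at hdiv; exact one_ne_zero hdiv.symm
    have hnum : ∑ b ∈ β, P a b x0 y0 = ∑ b, P a b x0 y0 :=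
      (div_eq_one_iff_eq hden).mp hdiv
    have hcompl : ∑ b ∈ βᶜ, P a b x0 y0 = 0 := by
      have := Finset.sum_add_sum_compl β (fun b => P a b x0 y0)
      linarith
    exact (Finset.sum_eq_zero_iff_of_nonneg
      (fun b _ => hPnonneg a b x0 y0)).mp hcompl b (Finset.mem_compl.mpr hbβ)
  have hβcert : ∀ b ∈ β, ∀ a, a ∉ α → P a b x0 y0 = 0 := by
    intro b hbβ a haα
    have hbN1 : b ∈ (S (N+1)).2 := by rw [hNstab]; exact hbβ
    rw [hSsucc N] at hbN1
    obtain ⟨-, hdiv⟩ := Finset.mem_filter.mp hbN1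
    have hden : (∑ a, P a b x0 y0) ≠ 0 := by
      intro h0; rw [h0, div_zero] at hdiv; exact one_ne_zero hdiv.symm
    have hnum : ∑ a ∈ α, P a b x0 y0 = ∑ a, P a b x0 y0 :=
      (div_eq_one_iff_eq hden).mp hdiv
    have hcompl : ∑ a ∈ αᶜ, P a b x0 y0 = 0 := by
      have := Finset.sum_add_sum_compl α (fun a => P a b x0 y0)
      linarith
    exact (Finset.sum_eq_zero_iff_of_nonneg
      (fun a _ => hPnonneg a b x0 y0)).mp hcompl a (Finset.mem_compl.mpr haα)
  -- the level-0 conditional probability conditions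
  have hα0 : ∀ a ∈ α, P a b1 x0 y1 = qA * ∑ b, P a b x0 y1 := by
    intro a haα
    have ha0' : a ∈ (S 0).1 := hmono1 N haα
    have hmem0 : a ∈ Finset.univ.filter
        fun a => P a b1 x0 y1 / (∑ b, P a b x0 y1) = qA := ha0'
    obtain ⟨-, hdiv⟩ := Finset.mem_filter.mp hmem0
    rcases eq_or_ne (∑ b, P a b x0 y1) 0 with h0 | h0
    · have hz := (Finset.sum_eq_zero_iff_of_nonneg
        (fun b _ => hPnonneg a b x0 y1)).mp h0
      rw [h0, mul_zero]
      exact hz b1 (Finset.mem_univ b1)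
    · exact (div_eq_iff h0).mp hdiv
  have hβ0 : ∀ b ∈ β, P a1 b x1 y0 = qB * ∑ a, P a b x1 y0 := by
    intro b hbβ
    have hb0' : b ∈ (S 0).2 := hmono2 N hbβ
    have hmem0 : b ∈ Finset.univ.filter
        fun b => P a1 b x1 y0 / (∑ a, P a b x1 y0) = qB := hb0'
    obtain ⟨-, hdiv⟩ := Finset.mem_filter.mp hmem0
    rcases eq_or_ne (∑ a, P a b x1 y0) 0 with h0 | h0
    · have hz := (Finset.sum_eq_zero_iff_of_nonneg
        (fun a _ => hPnonneg a b x1 y0)).mp h0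
      rw [h0, mul_zero]
      exact hz a1 (Finset.mem_univ a1)
    · exact (div_eq_iff h0).mp hdiv
  -- the common event probability
  have hwpos : 0 < ∑ a ∈ α, ∑ b ∈ β, P a b x0 y0 := by
    have h1 : P a0 b0 x0 y0 ≤ ∑ b ∈ β, P a0 b x0 y0 :=
      Finset.single_le_sum (fun b _ => hPnonneg a0 b x0 y0) hb0β
    have h2 : ∑ b ∈ β, P a0 b x0 y0 ≤ ∑ a ∈ α, ∑ b ∈ β, P a b x0 y0 :=
      Finset.single_le_sum (f := fun a => ∑ b ∈ β, P a b x0 y0)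
        (fun a _ => Finset.sum_nonneg fun b _ => hPnonneg a b x0 y0) ha0α
    linarith
  have hsum_restrict : ∀ a ∈ α, ∑ b ∈ β, P a b x0 y0 = ∑ b, P a b x0 y0 := by
    intro a haα
    exact Finset.sum_subset (Finset.subset_univ β)
      fun b _ hbβ => hαcert a haα b hbβ
  have hsum_restrictB : ∀ b ∈ β, ∑ a ∈ α, P a b x0 y0 = ∑ a, P a b x0 y0 := by
    intro b hbβ
    exact Finset.sum_subset (Finset.subset_univ α)
      fun a _ haα => hβcert b hbβ a haα
  have ht : ∑ a ∈ α, P a b1 x0 y1 = qA * ∑ a ∈ α, ∑ b ∈ β, P a b x0 y0 := by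
    rw [Finset.mul_sum]
    refine Finset.sum_congr rfl fun a haα => ?_
    rw [hα0 a haα, hnsA a x0 y1 y0, hsum_restrict a haα]
  have hs : ∑ b ∈ β, P a1 b x1 y0 = qB * ∑ a ∈ α, ∑ b ∈ β, P a b x0 y0 := by
    rw [Finset.sum_comm, Finset.mul_sum]
    refine Finset.sum_congr rfl fun b hbβ => ?_
    rw [hβ0 b hbβ, hnsB b y0 x1 x0, hsum_restrictB b hbβ]
  -- the quantum step: zero-trace products vanish
  have hzero : ∀ (sa : Finset (Fin nA)) (sb : Finset (Fin nB)) (x : Fin nX) (y : Fin nY),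
      (∀ a ∈ sa, ∀ b ∈ sb, P a b x y = 0) →
      (Matrix.kroneckerMap (· * ·) (∑ a ∈ sa, E x a) (∑ b ∈ sb, F y b)) * ρ = 0 := by
    intro sa sb x y hz
    apply qaux_psd_mul_trace_zero (qaux_psd_kron (qaux_psd_sum _ _ fun a _ => hE x a)
      (qaux_psd_sum _ _ fun b _ => hF y b)) hρ
    rw [hkron_sum, Finset.sum_mul, Matrix.trace_sum]
    refine Finset.sum_eq_zero fun a ha => ?_
    rw [Finset.sum_mul, Matrix.trace_sum]
    refine Finset.sum_eq_zero fun b hb => ?_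
    rw [← hP, hz a ha b hb, Complex.ofReal_zero]
  have h1 : (Matrix.kroneckerMap (· * ·) (∑ a ∈ α, E x0 a) (∑ b ∈ βᶜ, F y0 b)) * ρ = 0 :=
    hzero α βᶜ x0 y0 fun a ha b hb => hαcert a ha b (Finset.mem_compl.mp hb)
  have h2 : (Matrix.kroneckerMap (· * ·) (∑ a ∈ αᶜ, E x0 a) (∑ b ∈ β, F y0 b)) * ρ = 0 :=
    hzero αᶜ β x0 y0 fun a ha b hb => hβcert b hb a (Finset.mem_compl.mp ha)
  have h3 : (Matrix.kroneckerMap (· * ·) (∑ a ∈ ({a1} : Finset (Fin nA)), E x1 a)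
      (∑ b ∈ ({b1} : Finset (Fin nB))ᶜ, F y1 b)) * ρ = 0 := by
    refine hzero {a1} {b1}ᶜ x1 y1 fun a ha b hb => ?_
    have ha' : a = a1 := Finset.mem_singleton.mp ha
    have hb' : b ≠ b1 := Finset.notMem_singleton.mp (Finset.mem_compl.mp hb)
    apply hpc a b
    intro heq
    apply hb'
    apply Fin.ext
    have hva : (a : ℕ) = 1 := by rw [ha']
    have hvb : (b1 : ℕ) = 1 := rfl
    omega
  have h4 : (Matrix.kroneckerMap (· * ·) (∑ a ∈ ({a1} : Finset (Fin nA))ᶜ, E x1 a)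
      (∑ b ∈ ({b1} : Finset (Fin nB)), F y1 b)) * ρ = 0 := by
    refine hzero {a1}ᶜ {b1} x1 y1 fun a ha b hb => ?_
    have ha' : a ≠ a1 := Finset.notMem_singleton.mp (Finset.mem_compl.mp ha)
    have hb' : b = b1 := Finset.mem_singleton.mp hb
    apply hpc a b
    intro heq
    apply ha'
    apply Fin.ext
    have hvb : (b : ℕ) = 1 := by rw [hb']
    have hva : (a1 : ℕ) = 1 := rfl
    omega
  simp only [Finset.sum_singleton] at h3 h4
  -- cancellation: marginal operator identities on the state
  have hcancel : ∀ (A A' : Matrix (Fin dA) (Fin dA) ℂ) (B B' : Matrix (Fin dB) (Fin dB) ℂ),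
      A + A' = 1 → B + B' = 1 →
      (Matrix.kroneckerMap (· * ·) A B') * ρ = 0 →
      (Matrix.kroneckerMap (· * ·) A' B) * ρ = 0 →
      (Matrix.kroneckerMap (· * ·) A (1 : Matrix (Fin dB) (Fin dB) ℂ)) * ρ =
      (Matrix.kroneckerMap (· * ·) (1 : Matrix (Fin dA) (Fin dA) ℂ) B) * ρ := by
    intro A A' B B' hAsum hBsum hz1 hz2
    have e1 : (Matrix.kroneckerMap (· * ·) A (1 : Matrix (Fin dB) (Fin dB) ℂ)) * ρ =
        (Matrix.kroneckerMap (· * ·) A B) * ρ := by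
      rw [← hBsum, Matrix.kronecker_add, add_mul, hz1, add_zero]
    have e2 : (Matrix.kroneckerMap (· * ·) (1 : Matrix (Fin dA) (Fin dA) ℂ) B) * ρ =
        (Matrix.kroneckerMap (· * ·) A B) * ρ := by
      rw [← hAsum, Matrix.add_kronecker, add_mul, hz2, add_zero]
    rw [e1, e2]
  have hsum_singleton_a : (∑ a ∈ ({a1} : Finset (Fin nA)), E x1 a) = E x1 a1 :=
    Finset.sum_singleton _ _
  have hsum_singleton_b : (∑ b ∈ ({b1} : Finset (Fin nB)), F y1 b) = F y1 b1 :=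
    Finset.sum_singleton _ _
  have hplusM : (∑ a ∈ α, E x0 a) + (∑ a ∈ αᶜ, E x0 a) = 1 := by
    rw [Finset.sum_add_sum_compl]; exact hEsum x0
  have hplusN : (∑ b ∈ β, F y0 b) + (∑ b ∈ βᶜ, F y0 b) = 1 := by
    rw [Finset.sum_add_sum_compl]; exact hFsum y0
  have hplusG : E x1 a1 + (∑ a ∈ ({a1} : Finset (Fin nA))ᶜ, E x1 a) = 1 := by
    rw [← hsum_singleton_a, Finset.sum_add_sum_compl]; exact hEsum x1
  have hplusF : F y1 b1 + (∑ b ∈ ({b1} : Finset (Fin nB))ᶜ, F y1 b) = 1 := by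
    rw [← hsum_singleton_b, Finset.sum_add_sum_compl]; exact hFsum y1
  have hMN : (Matrix.kroneckerMap (· * ·) (∑ a ∈ α, E x0 a)
        (1 : Matrix (Fin dB) (Fin dB) ℂ)) * ρ =
      (Matrix.kroneckerMap (· * ·) (1 : Matrix (Fin dA) (Fin dA) ℂ)
        (∑ b ∈ β, F y0 b)) * ρ :=
    hcancel _ _ _ _ hplusM hplusN h1 h2
  have hGF : (Matrix.kroneckerMap (· * ·) (E x1 a1)
        (1 : Matrix (Fin dB) (Fin dB) ℂ)) * ρ =
      (Matrix.kroneckerMap (· * ·) (1 : Matrix (Fin dA) (Fin dA) ℂ) (F y1 b1)) * ρ :=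
    hcancel _ _ _ _ hplusG hplusF h3 h4
  -- express both sums as traces
  have hTc : ((∑ a ∈ α, P a b1 x0 y1 : ℝ) : ℂ) =
      ((Matrix.kroneckerMap (· * ·) ((∑ a ∈ α, E x0 a) * E x1 a1)
        (1 : Matrix (Fin dB) (Fin dB) ℂ)) * ρ).trace := by
    push_cast
    have e0 : ∀ a, (P a b1 x0 y1 : ℂ) =
        ((Matrix.kroneckerMap (· * ·) (E x0 a) (F y1 b1)) * ρ).trace :=
      fun a => hP a b1 x0 y1
    calc ∑ a ∈ α, (P a b1 x0 y1 : ℂ)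
        = ((Matrix.kroneckerMap (· * ·) (∑ a ∈ α, E x0 a)
            (∑ b ∈ ({b1} : Finset (Fin nB)), F y1 b)) * ρ).trace := by
          rw [hkron_sum, Finset.sum_mul, Matrix.trace_sum]
          refine Finset.sum_congr rfl fun a _ => ?_
          rw [Finset.sum_singleton]
          exact e0 a
      _ = ((Matrix.kroneckerMap (· * ·) (∑ a ∈ α, E x0 a)
            (1 : Matrix (Fin dB) (Fin dB) ℂ)) *
          ((Matrix.kroneckerMap (· * ·) (1 : Matrix (Fin dA) (Fin dA) ℂ) (F y1 b1)) * ρ)).trace := by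
          rw [← Matrix.mul_assoc, ← Matrix.mul_kronecker_mul, Matrix.mul_one,
            Matrix.one_mul, hsum_singleton_b]
      _ = ((Matrix.kroneckerMap (· * ·) (∑ a ∈ α, E x0 a)
            (1 : Matrix (Fin dB) (Fin dB) ℂ)) *
          ((Matrix.kroneckerMap (· * ·) (E x1 a1)
            (1 : Matrix (Fin dB) (Fin dB) ℂ)) * ρ)).trace := by rw [hGF]
      _ = ((Matrix.kroneckerMap (· * ·) ((∑ a ∈ α, E x0 a) * E x1 a1)
            (1 : Matrix (Fin dB) (Fin dB) ℂ)) * ρ).trace := by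
          rw [← Matrix.mul_assoc, ← Matrix.mul_kronecker_mul, Matrix.mul_one]
  have hSc : ((∑ b ∈ β, P a1 b x1 y0 : ℝ) : ℂ) =
      ((Matrix.kroneckerMap (· * ·) (E x1 a1 * (∑ a ∈ α, E x0 a))
        (1 : Matrix (Fin dB) (Fin dB) ℂ)) * ρ).trace := by
    push_cast
    calc ∑ b ∈ β, (P a1 b x1 y0 : ℂ)
        = ((Matrix.kroneckerMap (· * ·) (∑ a ∈ ({a1} : Finset (Fin nA)), E x1 a)
            (∑ b ∈ β, F y0 b)) * ρ).trace := by
          rw [hkron_sum, Finset.sum_singleton, Finset.sum_mul, Matrix.trace_sum]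
          exact Finset.sum_congr rfl fun b _ => hP a1 b x1 y0
      _ = ((Matrix.kroneckerMap (· * ·) (E x1 a1)
            (1 : Matrix (Fin dB) (Fin dB) ℂ)) *
          ((Matrix.kroneckerMap (· * ·) (1 : Matrix (Fin dA) (Fin dA) ℂ)
            (∑ b ∈ β, F y0 b)) * ρ)).trace := by
          rw [← Matrix.mul_assoc, ← Matrix.mul_kronecker_mul, Matrix.mul_one,
            Matrix.one_mul, hsum_singleton_a]
      _ = ((Matrix.kroneckerMap (· * ·) (E x1 a1)
            (1 : Matrix (Fin dB) (Fin dB) ℂ)) *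
          ((Matrix.kroneckerMap (· * ·) (∑ a ∈ α, E x0 a)
            (1 : Matrix (Fin dB) (Fin dB) ℂ)) * ρ)).trace := by rw [hMN]
      _ = ((Matrix.kroneckerMap (· * ·) (E x1 a1 * (∑ a ∈ α, E x0 a))
            (1 : Matrix (Fin dB) (Fin dB) ℂ)) * ρ).trace := by
          rw [← Matrix.mul_assoc, ← Matrix.mul_kronecker_mul, Matrix.mul_one]
  -- conjugate symmetry of the trace
  have hMH := (qaux_psd_sum α (fun a => E x0 a) fun a _ => hE x0 a).1.eq
  have hGH := (hE x1 a1).1.eq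
  have hstar : ((Matrix.kroneckerMap (· * ·) ((∑ a ∈ α, E x0 a) * E x1 a1)
        (1 : Matrix (Fin dB) (Fin dB) ℂ)) * ρ).trace =
      star (((Matrix.kroneckerMap (· * ·) (E x1 a1 * (∑ a ∈ α, E x0 a))
        (1 : Matrix (Fin dB) (Fin dB) ℂ)) * ρ).trace) := by
    rw [← Matrix.trace_conjTranspose]
    rw [Matrix.conjTranspose_mul, qaux_kron_conjTranspose, Matrix.conjTranspose_one,
      Matrix.conjTranspose_mul, hGH, hMH, hρ.1.eq, Matrix.trace_mul_comm]
  -- conclude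
  have hts : (∑ a ∈ α, P a b1 x0 y1) = ∑ b ∈ β, P a1 b x1 y0 := by
    have hc : ((∑ a ∈ α, P a b1 x0 y1 : ℝ) : ℂ) = ((∑ b ∈ β, P a1 b x1 y0 : ℝ) : ℂ) := by
      rw [hTc, hstar, ← hSc]
      simp
    exact_mod_cast hc
  rw [ht, hs] at hts
  exact hqne (mul_right_cancel₀ (ne_of_gt hwpos) hts)
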